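/- Let n ≥ 2, let C be an n-dimensional cone in ℝ^{n+1}, and let r : I → ℝ^{n+1}∖{0} be a non-colliding geodesic on C. Define α : I → ℝ^{n+1} by α(t) = r(t)/|r(t)|. Then for every t ∈ I at which α is twice differentiable, the vectors α̇(t) and α̈(t) are linearly independent. -/

import Mathlib

open scoped InnerProductSpace

/-- `IsCone n k C U a` : `C` is the `k`-dimensional cone in `ℝⁿ` generated by the affine
plane `P = a + U`, where `U` is a `k`-dimensional linear subspace, `a ∈ U^⊥`, and `P`
meets the unit sphere in more than one point; `C = {x ≠ 0 : x/|x| ∈ P}`. -/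
def IsCone (n k : ℕ) (C : Set (EuclideanSpace ℝ (Fin n)))
    (U : Submodule ℝ (EuclideanSpace ℝ (Fin n))) (a : EuclideanSpace ℝ (Fin n)) : Prop :=
  Module.finrank ℝ U = k ∧ a ∈ Uᗮ ∧
  (∃ x y : EuclideanSpace ℝ (Fin n), x ≠ y ∧ ‖x‖ = 1 ∧ ‖y‖ = 1 ∧ x - a ∈ U ∧ y - a ∈ U) ∧
  C = {x | x ≠ 0 ∧ ‖x‖⁻¹ • x - a ∈ U}

/-- `C` is a `k`-dimensional cone of aperture `ψ` in `ℝⁿ`: `cos ψ = |a|`, `ψ ∈ (0, π/2]`. -/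
def IsConeWithAperture (n k : ℕ) (C : Set (EuclideanSpace ℝ (Fin n)))
    (U : Submodule ℝ (EuclideanSpace ℝ (Fin n))) (a : EuclideanSpace ℝ (Fin n))
    (ψ : ℝ) : Prop :=
  IsCone n k C U a ∧ ψ ∈ Set.Ioc 0 (Real.pi / 2) ∧ Real.cos ψ = ‖a‖

/-- A curve `r` (with second derivative `r''`) is a geodesic on the cone `C` generated by
`a + U` : it lies on `C` and its acceleration is orthogonal to the tangent space
`span{r(t)} ⊕ (U ∩ r(t)^⊥)` of `C` at `r(t)`, for every `t ∈ I`. -/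
def IsGeodesicOn (n : ℕ) (I : Set ℝ) (r r'' : ℝ → EuclideanSpace ℝ (Fin n))
    (C : Set (EuclideanSpace ℝ (Fin n)))
    (U : Submodule ℝ (EuclideanSpace ℝ (Fin n))) : Prop :=
  (∀ t ∈ I, r t ∈ C) ∧
  ∀ t ∈ I, ⟪r'' t, r t⟫_ℝ = 0 ∧
    ∀ w ∈ U, ⟪w, r t⟫_ℝ = 0 → ⟪r'' t, w⟫_ℝ = 0

section Aux

open scoped InnerProductSpace

private lemma deriv_zero_of_const_on' {f : ℝ → ℝ} {I : Set ℝ} (hI : IsOpen I) {c : ℝ}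
    (h : ∀ s ∈ I, f s = c) {t : ℝ} (ht : t ∈ I) {d : ℝ} (hd : HasDerivAt f d t) : d = 0 := by
  have h0 : HasDerivAt f 0 t :=
    (hasDerivAt_const t c).congr_of_eventuallyEq
      (Filter.eventuallyEq_of_mem (hI.mem_nhds ht) fun s hs => h s hs)
  exact hd.unique h0

private lemma const_of_hasDerivAt_zero' {f : ℝ → ℝ} {I : Set ℝ} (hI : IsOpen I)
    (hconv : Convex ℝ I) (hf : ∀ s ∈ I, HasDerivAt f 0 s) {s t : ℝ}
    (hs : s ∈ I) (ht : t ∈ I) : f s = f t := by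
  have hdiff : DifferentiableOn ℝ f I := fun x hx =>
    ((hf x hx).differentiableAt).differentiableWithinAt
  refine hconv.is_const_of_fderivWithin_eq_zero hdiff (fun x hx => ?_) hs ht
  have h0 : fderiv ℝ f x = 0 := by
    ext y
    rw [(hf x hx).hasFDerivAt.fderiv]
    simp
  rw [fderivWithin_of_isOpen hI hx, h0]

private lemma deriv_mem_of_mem' {m : ℕ} {f : ℝ → EuclideanSpace ℝ (Fin m)}
    {f' : EuclideanSpace ℝ (Fin m)} {U : Submodule ℝ (EuclideanSpace ℝ (Fin m))}
    {I : Set ℝ} (hI : IsOpen I) {t : ℝ} (ht : t ∈ I)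
    (hmem : ∀ s ∈ I, f s ∈ U) (hd : HasDerivAt f f' t) : f' ∈ U := by
  have hclosed : IsClosed (U : Set (EuclideanSpace ℝ (Fin m))) := U.closed_of_finiteDimensional
  have htend := hasDerivAt_iff_tendsto_slope.mp hd
  refine hclosed.mem_of_tendsto htend ?_
  filter_upwards [mem_nhdsWithin_of_mem_nhds (hI.mem_nhds ht)] with y hy
  rw [slope_def_module]
  exact U.smul_mem _ (U.sub_mem (hmem y hy) (hmem t ht))

end Aux

/-- Let `C` be an `n`-dimensional cone in `ℝ^{n+1}` (`n ≥ 2`) and let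
`r` be a non-colliding geodesic on `C`. Let `α(t) = r(t)/|r(t)|`. Then at every `t ∈ I`
at which `α` is twice differentiable (witnessed by a derivative function `α'` of `α` on
`I` and a second derivative `a''` at `t`), the vectors `α̇(t)` and `α̈(t)` are linearly
independent. -/
theorem alpha_first_two_derivatives_independent
    (n : ℕ) (hn : 2 ≤ n)
    (I : Set ℝ) (hIopen : IsOpen I) (hIconn : I.OrdConnected)
    (r r' r'' : ℝ → EuclideanSpace ℝ (Fin (n + 1)))
    (hne : ∀ t ∈ I, r t ≠ 0)
    (hd1 : ∀ t ∈ I, HasDerivAt r (r' t) t)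
    (hd2 : ∀ t ∈ I, HasDerivAt r' (r'' t) t)
    (hC2 : ContinuousOn r'' I)
    (hnoncoll : ¬ (∀ t ∈ I, ∃ c : ℝ, r' t = c • r t))
    (C : Set (EuclideanSpace ℝ (Fin (n + 1))))
    (U : Submodule ℝ (EuclideanSpace ℝ (Fin (n + 1))))
    (a : EuclideanSpace ℝ (Fin (n + 1)))
    (hC : IsCone (n + 1) n C U a)
    (hgeo : IsGeodesicOn (n + 1) I r r'' C U)
    (α : ℝ → EuclideanSpace ℝ (Fin (n + 1)))
    (hα : ∀ t, α t = ‖r t‖⁻¹ • r t) :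
    ∀ t ∈ I, ∀ (α' : ℝ → EuclideanSpace ℝ (Fin (n + 1)))
      (a'' : EuclideanSpace ℝ (Fin (n + 1))),
      (∀ s ∈ I, HasDerivAt α (α' s) s) → HasDerivAt α' a'' t →
      LinearIndependent ℝ ![α' t, a''] := by

  intro t ht α' a'' hα' ha''
  obtain ⟨hgeo1, hgeo2⟩ := hgeo
  obtain ⟨-, haU, -, hCeq⟩ := hC
  have hconv : Convex ℝ I := convex_iff_ordConnected.mpr hIconn
  have hρpos : ∀ s ∈ I, (0:ℝ) < ‖r s‖ := fun s hs => norm_pos_iff.mpr (hne s hs)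
  have hαnorm : ∀ s ∈ I, ‖α s‖ = 1 := by
    intro s hs
    rw [hα, norm_smul, norm_inv, norm_norm, inv_mul_cancel₀ (hρpos s hs).ne']
  have hαU : ∀ s ∈ I, α s - a ∈ U := by
    intro s hs
    have hmem := hgeo1 s hs
    rw [hCeq] at hmem
    rw [hα]
    exact hmem.2
  have hrα : ∀ s ∈ I, r s = ‖r s‖ • α s := by
    intro s hs
    rw [hα, smul_smul, mul_inv_cancel₀ (hρpos s hs).ne', one_smul]
  have hunit : ∀ s ∈ I, ⟪α s, α s⟫_ℝ = 1 := by
    intro s hs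
    rw [real_inner_self_eq_norm_sq, hαnorm s hs]
    norm_num
  have hαa : ∀ s ∈ I, ⟪α s, a⟫_ℝ = ⟪a, a⟫_ℝ := by
    intro s hs
    have h0 : ⟪α s - a, a⟫_ℝ = 0 := (Submodule.mem_orthogonal U a).mp haU _ (hαU s hs)
    rw [inner_sub_left] at h0
    linarith
  have hd_unit : ∀ s ∈ I, ⟪α' s, α s⟫_ℝ = 0 := by
    intro s hs
    have hD : HasDerivAt (fun u => ⟪α u, α u⟫_ℝ) (⟪α s, α' s⟫_ℝ + ⟪α' s, α s⟫_ℝ) s :=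
      (hα' s hs).inner ℝ (hα' s hs)
    have h0 := deriv_zero_of_const_on' hIopen hunit hs hD
    have hsym := real_inner_comm (α s) (α' s)
    linarith
  have hd_a : ∀ s ∈ I, ⟪α' s, a⟫_ℝ = 0 := by
    intro s hs
    have hD : HasDerivAt (fun u => ⟪α u, a⟫_ℝ) (⟪α s, (0:EuclideanSpace ℝ (Fin (n+1)))⟫_ℝ + ⟪α' s, a⟫_ℝ) s :=
      (hα' s hs).inner ℝ (hasDerivAt_const s a)
    have h0 := deriv_zero_of_const_on' hIopen hαa hs hD
    simpa using h0
  have hperp : ∀ s ∈ I, ⟪α' s, α s - a⟫_ℝ = 0 := by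
    intro s hs
    rw [inner_sub_right, hd_unit s hs, hd_a s hs]
    ring
  have hsec : ⟪a'', α t - a⟫_ℝ = -⟪α' t, α' t⟫_ℝ := by
    have h1 : HasDerivAt (fun u => α u - a) (α' t) t := (hα' t ht).sub_const a
    have hD : HasDerivAt (fun u => ⟪α' u, α u - a⟫_ℝ) (⟪α' t, α' t⟫_ℝ + ⟪a'', α t - a⟫_ℝ) t :=
      ha''.inner ℝ h1
    have h0 := deriv_zero_of_const_on' hIopen hperp ht hD
    linarith
  have hα'U : ∀ s ∈ I, α' s ∈ U := by
    intro s hs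
    exact deriv_mem_of_mem' hIopen hs hαU ((hα' s hs).sub_const a)
  have hα'r : ∀ s ∈ I, ⟪α' s, r s⟫_ℝ = 0 := by
    intro s hs
    rw [hrα s hs, real_inner_smul_right, hd_unit s hs, mul_zero]
  have hr'dec : ∀ s ∈ I, ∃ d : ℝ, r' s = d • α s + ‖r s‖ • α' s := by
    intro s hs
    have hdiff : DifferentiableAt ℝ (fun u => ‖r u‖) s :=
      ((hd1 s hs).differentiableAt).norm ℝ (hne s hs)
    obtain ⟨d, hd⟩ : ∃ d, HasDerivAt (fun u => ‖r u‖) d s := ⟨_, hdiff.hasDerivAt⟩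
    refine ⟨d, ?_⟩
    have hprod : HasDerivAt (fun u => ‖r u‖ • α u) (‖r s‖ • α' s + d • α s) s :=
      hd.smul (hα' s hs)
    have heq : r =ᶠ[nhds s] fun u => ‖r u‖ • α u :=
      Filter.eventuallyEq_of_mem (hIopen.mem_nhds hs) fun u hu => hrα u hu
    have hD : HasDerivAt r (‖r s‖ • α' s + d • α s) s := hprod.congr_of_eventuallyEq heq
    rw [(hd1 s hs).unique hD]
    exact add_comm _ _
  have hr''r : ∀ s ∈ I, ⟪r'' s, r s⟫_ℝ = 0 := fun s hs => (hgeo2 s hs).1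
  have hr''r' : ∀ s ∈ I, ⟪r'' s, r' s⟫_ℝ = 0 := by
    intro s hs
    obtain ⟨d, hdec⟩ := hr'dec s hs
    have hα''0 : ⟪r'' s, α' s⟫_ℝ = 0 := (hgeo2 s hs).2 (α' s) (hα'U s hs) (hα'r s hs)
    have hαr'' : ⟪r'' s, α s⟫_ℝ = 0 := by
      rw [hα, real_inner_smul_right, hr''r s hs, mul_zero]
    rw [hdec, inner_add_right, real_inner_smul_right, real_inner_smul_right, hα''0, hαr'']
    ring
  set L : ℝ → ℝ := fun s => ⟪r s, r s⟫_ℝ * ⟪r' s, r' s⟫_ℝ - ⟪r s, r' s⟫_ℝ * ⟪r s, r' s⟫_ℝ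
    with hLdef
  have hLderiv : ∀ s ∈ I, HasDerivAt L 0 s := by
    intro s hs
    have h1 : HasDerivAt (fun u => ⟪r u, r u⟫_ℝ) (⟪r s, r' s⟫_ℝ + ⟪r' s, r s⟫_ℝ) s :=
      (hd1 s hs).inner ℝ (hd1 s hs)
    have h2 : HasDerivAt (fun u => ⟪r' u, r' u⟫_ℝ) (⟪r' s, r'' s⟫_ℝ + ⟪r'' s, r' s⟫_ℝ) s :=
      (hd2 s hs).inner ℝ (hd2 s hs)
    have h3 : HasDerivAt (fun u => ⟪r u, r' u⟫_ℝ) (⟪r s, r'' s⟫_ℝ + ⟪r' s, r' s⟫_ℝ) s :=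
      (hd1 s hs).inner ℝ (hd2 s hs)
    have hD := (h1.mul h2).sub (h3.mul h3)
    have hval : (⟪r s, r' s⟫_ℝ + ⟪r' s, r s⟫_ℝ) * ⟪r' s, r' s⟫_ℝ
        + ⟪r s, r s⟫_ℝ * (⟪r' s, r'' s⟫_ℝ + ⟪r'' s, r' s⟫_ℝ)
        - ((⟪r s, r'' s⟫_ℝ + ⟪r' s, r' s⟫_ℝ) * ⟪r s, r' s⟫_ℝ
          + ⟪r s, r' s⟫_ℝ * (⟪r s, r'' s⟫_ℝ + ⟪r' s, r' s⟫_ℝ)) = 0 := by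
      have e1 := hr''r' s hs
      have e2 := hr''r s hs
      have e3 : ⟪r s, r'' s⟫_ℝ = 0 := by rw [real_inner_comm]; exact e2
      have e5 : ⟪r' s, r'' s⟫_ℝ = 0 := by rw [real_inner_comm]; exact e1
      have e4 : ⟪r' s, r s⟫_ℝ = ⟪r s, r' s⟫_ℝ := real_inner_comm _ _
      rw [e1, e3, e5, e4]
      ring
    rw [hLdef]
    exact hD.congr_deriv hval
  have hLconst : ∀ s ∈ I, L s = L t := fun s hs =>
    const_of_hasDerivAt_zero' hIopen hconv hLderiv hs ht
  have hα't : α' t ≠ 0 := by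
    intro h0
    apply hnoncoll
    obtain ⟨d, hdec⟩ := hr'dec t ht
    rw [h0, smul_zero, add_zero] at hdec
    have hLt : L t = 0 := by
      simp only [hLdef]
      rw [hdec, hrα t ht]
      simp only [real_inner_smul_left, real_inner_smul_right, hunit t ht]
      ring
    intro s hs
    have hLs : L s = 0 := (hLconst s hs).trans hLt
    simp only [hLdef] at hLs
    have heq : ‖⟪r s, r' s⟫_ℝ‖ = ‖r s‖ * ‖r' s‖ := by
      have h1 : ⟪r s, r' s⟫_ℝ * ⟪r s, r' s⟫_ℝ = (‖r s‖ * ‖r' s‖) * (‖r s‖ * ‖r' s‖) := by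
        have e1 := real_inner_self_eq_norm_sq (r s)
        have e2 := real_inner_self_eq_norm_sq (r' s)
        nlinarith [hLs]
      have h2 : |⟪r s, r' s⟫_ℝ| = |‖r s‖ * ‖r' s‖| := by
        rw [← Real.sqrt_mul_self_eq_abs, ← Real.sqrt_mul_self_eq_abs, h1]
      rw [Real.norm_eq_abs, h2, abs_of_nonneg (by positivity)]
    rcases ((norm_inner_eq_norm_tfae (𝕜 := ℝ) (r s) (r' s)).out 0 2).mp heq with h | ⟨c, hc⟩
    · exact absurd h (hne s hs)
    · exact ⟨c, hc⟩
  rw [LinearIndependent.pair_iff]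
  intro c₁ c₂ hsum
  have hinner : c₁ * ⟪α' t, α t - a⟫_ℝ + c₂ * ⟪a'', α t - a⟫_ℝ = 0 := by
    have h0 : ⟪c₁ • α' t + c₂ • a'', α t - a⟫_ℝ = 0 := by rw [hsum, inner_zero_left]
    rw [inner_add_left, real_inner_smul_left, real_inner_smul_left] at h0
    exact h0
  rw [hperp t ht, hsec] at hinner
  have hα'sq : 0 < ⟪α' t, α' t⟫_ℝ := by
    rw [real_inner_self_eq_norm_sq]
    exact pow_pos (norm_pos_iff.mpr hα't) 2
  have hc₂ : c₂ = 0 := by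
    have h0 : c₂ * ⟪α' t, α' t⟫_ℝ = 0 := by linarith
    exact (mul_eq_zero.mp h0).resolve_right (ne_of_gt hα'sq)
  refine ⟨?_, hc₂⟩
  rw [hc₂, zero_smul, add_zero] at hsum
  rcases smul_eq_zero.mp hsum with h | h
  · exact h
  · exact absurd h hα't
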